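/- Fix k ≥ 2, X^max > 0, δ ∈ (0,1), and let X, X' ∈ [−X^max, X^max]^d. Let w = 2X^max/(k−1) be the bin width, and for each coordinate j define the stochastic quantization to integer bin indices: U(X)(j) = r_j + 1 with probability (X(j) − B(r_j))/w and U(X)(j) = r_j otherwise, independently across j, where B(r) = −X^max + rw and B(r_j) ≤ X(j) ≤ B(r_j + 1); define U(X') analogously. Set L̃ = ‖X − X'‖₁/w. Then there exist coupled random vectors Y, Y' ∈ ℤ^d whose marginal laws equal those of U(X) and U(X') respectively, such that almost surely ‖Y − Y'‖_∞ ≤ ‖X − X'‖_∞/w + 2, and with probability at least 1 − δ both of the following hold: ‖Y − Y'‖₁ ≤ L̃ + √(2 L̃ log(2/δ)) + (4/3) log(2/δ), and ‖Y − Y'‖₂ ≤ ‖X − X'‖₂/w + √( L̃ + √(8 L̃ log(2/δ)) + (4/3) log(2/δ) ). -/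

import Mathlib

open MeasureTheory ProbabilityTheory

namespace QuantCoupling

noncomputable def I01 : Measure ℝ := volume.restrict (Set.Icc 0 1)

instance : IsProbabilityMeasure I01 :=
  ⟨by rw [I01, Measure.restrict_apply_univ, Real.volume_Icc]; norm_num⟩

lemma step_integral (α β : ℝ) (h0 : 0 ≤ α) (hab : α ≤ β) (hb1 : β ≤ 1) (c₀ c₁ : ℝ) :
    ∫ u, (c₀ + c₁ * (if α ≤ u ∧ u < β then (1:ℝ) else 0)) ∂I01 = c₀ + c₁ * (β - α) := by
  have hmeas : MeasurableSet (Set.Ico α β) := measurableSet_Ico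
  have hind : (fun u : ℝ => c₀ + c₁ * (if α ≤ u ∧ u < β then (1:ℝ) else 0))
      = fun u => c₀ + (Set.Ico α β).indicator (fun _ => c₁) u := by
    funext u
    by_cases h : α ≤ u ∧ u < β
    · rw [if_pos h, Set.indicator_of_mem (by exact h)]; ring
    · rw [if_neg h, Set.indicator_of_notMem (by exact h)]; ring
  have hI : I01 (Set.Ico α β) = ENNReal.ofReal (β - α) := by
    rw [I01, Measure.restrict_apply hmeas, Set.inter_eq_left.mpr ?_, Real.volume_Ico]
    intro x hx
    exact ⟨le_trans h0 hx.1, le_trans hx.2.le hb1⟩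
  rw [hind, integral_add (integrable_const _) ((integrable_const c₁).indicator hmeas),
    integral_const, integral_indicator_const _ hmeas, measureReal_def, measureReal_def, hI, measure_univ,
    ENNReal.toReal_ofReal (by linarith)]
  simp [mul_comm]

lemma coord_aux (z : ℤ) (α β : ℝ) (h0 : 0 ≤ α) (hab : α ≤ β) (hb1 : β ≤ 1)
    (χ : ℝ → ℝ) (hχ : ∀ u, χ u = if α ≤ u ∧ u < β then (1:ℝ) else 0) :
    ∃ a : ℝ, 0 ≤ a ∧ a ≤ |(z:ℝ) + (β - α)| ∧
      (∀ u, |(z:ℝ) + χ u| - a ∈ Set.Icc (0:ℝ) 1) ∧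
      (∫ u, (|(z:ℝ) + χ u| - a) ∂I01 ≤ |(z:ℝ) + (β - α)| - a) ∧
      (∀ u, (χ u - (β - α))^2 ∈ Set.Icc (0:ℝ) 1) ∧
      (∫ u, (χ u - (β - α))^2 ∂I01 ≤ |(z:ℝ) + (β - α)|) := by
  have ht0 : 0 ≤ β - α := by linarith
  have ht1 : β - α ≤ 1 := by linarith
  have hcase : (0 ≤ (z:ℝ) ∧ min |(z:ℝ)| |(z:ℝ)+1| = (z:ℝ) ∧ |(z:ℝ)| = (z:ℝ)
        ∧ |(z:ℝ)+1| = (z:ℝ)+1)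
      ∨ ((z:ℝ) ≤ -1 ∧ min |(z:ℝ)| |(z:ℝ)+1| = -((z:ℝ)+1) ∧ |(z:ℝ)| = -(z:ℝ)
        ∧ |(z:ℝ)+1| = -((z:ℝ)+1)) := by
    rcases le_or_gt 0 z with hz | hz
    · have hx0 : (0:ℝ) ≤ (z:ℝ) := Int.cast_nonneg_iff.mpr hz
      refine Or.inl ⟨hx0, ?_, abs_of_nonneg hx0, abs_of_nonneg (by linarith)⟩
      rw [abs_of_nonneg hx0, abs_of_nonneg (by linarith)]
      exact min_eq_left (by linarith)
    · have hx1 : (z:ℝ) ≤ -1 := by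
        have h' : ((z:ℤ):ℝ) + 1 ≤ 0 := by exact_mod_cast (show z + 1 ≤ 0 by omega)
        linarith
      refine Or.inr ⟨hx1, ?_, abs_of_nonpos (by linarith), abs_of_nonpos (by linarith)⟩
      rw [abs_of_nonpos (by linarith), abs_of_nonpos (by linarith)]
      exact min_eq_right (by linarith)
  refine ⟨min |(z:ℝ)| |(z:ℝ)+1|, le_min (abs_nonneg _) (abs_nonneg _), ?_, ?_, ?_, ?_, ?_⟩
  · rcases hcase with ⟨h1, h2, h3, h4⟩ | ⟨h1, h2, h3, h4⟩
    · rw [h2, abs_of_nonneg (by linarith)]; linarith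
    · rw [h2, abs_of_nonpos (by linarith)]; linarith
  · intro u
    rw [Set.mem_Icc, hχ u]
    split_ifs with h
    · rcases hcase with ⟨h1, h2, h3, h4⟩ | ⟨h1, h2, h3, h4⟩ <;>
        rw [h2] <;> constructor <;> [rw [h4]; rw [h4]; rw [h4]; rw [h4]] <;> linarith
    · rcases hcase with ⟨h1, h2, h3, h4⟩ | ⟨h1, h2, h3, h4⟩ <;>
        rw [h2, add_zero] <;> constructor <;> [rw [h3]; rw [h3]; rw [h3]; rw [h3]] <;> linarith
  · have hfe : (fun u => |(z:ℝ) + χ u| - min |(z:ℝ)| |(z:ℝ)+1|)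
        = fun u => (|(z:ℝ)| - min |(z:ℝ)| |(z:ℝ)+1|)
            + (|(z:ℝ)+1| - |(z:ℝ)|) * (if α ≤ u ∧ u < β then (1:ℝ) else 0) := by
      funext u
      rw [hχ u]
      split_ifs with h
      · ring
      · ring_nf
    rw [hfe, step_integral α β h0 hab hb1]
    rcases hcase with ⟨h1, h2, h3, h4⟩ | ⟨h1, h2, h3, h4⟩
    · rw [h2, h3, h4, abs_of_nonneg (by linarith)]; ring_nf; linarith
    · rw [h2, h3, h4, abs_of_nonpos (by linarith)]; ring_nf; linarith
  · intro u
    rw [Set.mem_Icc, hχ u]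
    split_ifs with h <;> constructor
    · positivity
    · nlinarith
    · positivity
    · nlinarith
  · have hfe : (fun u => (χ u - (β - α))^2)
        = fun u => (β - α)^2 + ((1-(β - α))^2 - (β - α)^2)
            * (if α ≤ u ∧ u < β then (1:ℝ) else 0) := by
      funext u
      rw [hχ u]
      split_ifs with h <;> ring
    rw [hfe, step_integral α β h0 hab hb1]
    rcases hcase with ⟨h1, h2, h3, h4⟩ | ⟨h1, h2, h3, h4⟩
    · rcases eq_or_lt_of_le h1 with h1' | h1'
      · rw [abs_of_nonneg (by linarith), ← h1']; nlinarith
      · have : (1:ℝ) ≤ (z:ℝ) := by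
          have h' : (1:ℤ) ≤ z := by exact_mod_cast (show (0:ℝ) < (z:ℝ) from h1')
          exact_mod_cast h'
        rw [abs_of_nonneg (by linarith)]; nlinarith
    · rw [abs_of_nonpos (by linarith)]; nlinarith

/-- Per-coordinate facts about the coupled quantization indicators. -/
lemma coord (z : ℤ) (p q : ℝ) (hp0 : 0 ≤ p) (hp1 : p ≤ 1) (hq0 : 0 ≤ q) (hq1 : q ≤ 1) :
    ∃ a : ℝ, 0 ≤ a ∧ a ≤ |(z:ℝ) + (p - q)| ∧
      (∀ u, |(z:ℝ) + ((if u < p then (1:ℝ) else 0) - (if u < q then 1 else 0))| - a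
        ∈ Set.Icc (0:ℝ) 1) ∧
      (∫ u, (|(z:ℝ) + ((if u < p then (1:ℝ) else 0) - (if u < q then 1 else 0))| - a) ∂I01
        ≤ |(z:ℝ) + (p - q)| - a) ∧
      (∀ u, (((if u < p then (1:ℝ) else 0) - (if u < q then 1 else 0)) - (p - q))^2
        ∈ Set.Icc (0:ℝ) 1) ∧
      (∫ u, ((((if u < p then (1:ℝ) else 0) - (if u < q then 1 else 0)) - (p - q))^2) ∂I01
        ≤ |(z:ℝ) + (p - q)|) := by
  set χ : ℝ → ℝ := fun u => (if u < p then (1:ℝ) else 0) - (if u < q then 1 else 0) with hχdef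
  rcases le_or_gt q p with hpq | hpq
  · -- q ≤ p : χ = indicator of [q, p)
    have hχ : ∀ u, χ u = if q ≤ u ∧ u < p then (1:ℝ) else 0 := by
      intro u
      show (if u < p then (1:ℝ) else 0) - (if u < q then 1 else 0) = _
      rcases lt_or_ge u q with h | h
      · rw [if_pos (show u < p from lt_of_lt_of_le h hpq), if_pos (show u < q from h),
          if_neg (show ¬(q ≤ u ∧ u < p) from fun hc => absurd h (not_lt.mpr hc.1))]
        norm_num
      · rcases lt_or_ge u p with h' | h'
        · rw [if_pos (show u < p from h'), if_neg (show ¬ u < q from not_lt.mpr h),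
            if_pos (show q ≤ u ∧ u < p from ⟨h, h'⟩)]
          norm_num
        · rw [if_neg (show ¬ u < p from not_lt.mpr h'),
            if_neg (show ¬ u < q from not_lt.mpr (le_trans hpq h')),
            if_neg (show ¬(q ≤ u ∧ u < p) from fun hc => absurd hc.2 (not_lt.mpr h'))]
          norm_num
    obtain ⟨a, ha0, ha1, hw1, hi1, hw2, hi2⟩ := coord_aux z q p hq0 hpq hp1 χ hχ
    have hpqe : p - q = p - q := rfl
    exact ⟨a, ha0, by simpa using ha1, by simpa using hw1, by simpa using hi1,
      by simpa using hw2, by simpa using hi2⟩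
  · -- p < q : -χ = indicator of [p, q)
    have hχ : ∀ u, -χ u = if p ≤ u ∧ u < q then (1:ℝ) else 0 := by
      intro u
      show -((if u < p then (1:ℝ) else 0) - (if u < q then 1 else 0)) = _
      rcases lt_or_ge u p with h | h
      · rw [if_pos (show u < p from h), if_pos (show u < q from lt_trans h hpq),
          if_neg (show ¬(p ≤ u ∧ u < q) from fun hc => absurd h (not_lt.mpr hc.1))]
        norm_num
      · rcases lt_or_ge u q with h' | h'
        · rw [if_neg (show ¬ u < p from not_lt.mpr h), if_pos (show u < q from h'),
            if_pos (show p ≤ u ∧ u < q from ⟨h, h'⟩)]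
          norm_num
        · rw [if_neg (show ¬ u < p from not_lt.mpr (le_trans hpq.le h')),
            if_neg (show ¬ u < q from not_lt.mpr h'),
            if_neg (show ¬(p ≤ u ∧ u < q) from fun hc => absurd hc.2 (not_lt.mpr h'))]
          norm_num
    obtain ⟨a, ha0, ha1, hw1, hi1, hw2, hi2⟩ :=
      coord_aux (-z) p q hp0 hpq.le hq1 (fun u => -χ u) hχ
    have habs : ∀ u, |((-z : ℤ):ℝ) + -χ u| = |(z:ℝ) + χ u| := by
      intro u
      push_cast
      rw [← abs_neg]
      ring_nf
    have habs2 : |((-z : ℤ):ℝ) + (q - p)| = |(z:ℝ) + (p - q)| := by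
      push_cast
      rw [← abs_neg]
      ring_nf
    have hsq : ∀ u, (-χ u - (q - p))^2 = (χ u - (p - q))^2 := by intro u; ring
    refine ⟨a, ha0, ?_, ?_, ?_, ?_, ?_⟩
    · rw [← habs2]; exact ha1
    · intro u; rw [← habs u]; exact hw1 u
    · calc ∫ u, (|(z:ℝ) + χ u| - a) ∂I01 = ∫ u, (|((-z : ℤ):ℝ) + -χ u| - a) ∂I01 := by
            congr 1; funext u; rw [habs u]
        _ ≤ |((-z : ℤ):ℝ) + (q - p)| - a := hi1
        _ = |(z:ℝ) + (p - q)| - a := by rw [habs2]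
    · intro u; rw [← hsq u]; exact hw2 u
    · calc ∫ u, ((χ u - (p - q))^2) ∂I01 = ∫ u, ((-χ u - (q - p))^2) ∂I01 := by
            congr 1; funext u; rw [hsq u]
        _ ≤ |((-z : ℤ):ℝ) + (q - p)| := hi2
        _ = |(z:ℝ) + (p - q)| := habs2

lemma chernoff_rate {M L c : ℝ} (hM0 : 0 ≤ M) (hL : M ≤ L) (hc : 0 < c) :
    ∃ lam : ℝ, 0 < lam ∧ lam ≤ 1 ∧
      M * (Real.exp lam - 1) - lam * (M + Real.sqrt (2*L*c) + 4/3*c) ≤ -c := by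
  have hL0 : 0 ≤ L := le_trans hM0 hL
  have hsq : Real.sqrt (2*M*c) ≤ Real.sqrt (2*L*c) := by
    apply Real.sqrt_le_sqrt; nlinarith
  by_cases h2c : 2*c ≤ M
  · have hMpos : 0 < M := by linarith
    set lam : ℝ := Real.sqrt (2*c/M) with hlam
    have hlam2 : lam^2 = 2*c/M := Real.sq_sqrt (by positivity)
    have hlampos : 0 < lam := Real.sqrt_pos.mpr (by positivity)
    have hlam1 : lam ≤ 1 := by
      rw [hlam, show (1:ℝ) = Real.sqrt 1 from (Real.sqrt_one).symm]
      apply Real.sqrt_le_sqrt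
      rw [div_le_one hMpos]; linarith
    have hMl2 : M * lam^2 = 2*c := by rw [hlam2]; field_simp
    have hMl3 : M * lam^3 = 2*c*lam := by
      have : M * lam^3 = (M * lam^2) * lam := by ring
      rw [this, hMl2]
    have hMl : M * lam = Real.sqrt (2*M*c) := by
      rw [show 2*M*c = (M*lam)^2 by nlinarith, Real.sqrt_sq (by positivity)]
    refine ⟨lam, hlampos, hlam1, ?_⟩
    have hexp : Real.exp lam ≤ 1 + lam + lam^2/2 + lam^3 * (2/9) := by
      have h := Real.exp_bound' hlampos.le hlam1 (n := 3) (by norm_num)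
      have h2 : (∑ m ∈ Finset.range 3, lam ^ m / m.factorial)
          = 1 + lam + lam^2/2 := by
        norm_num [Finset.sum_range_succ, Nat.factorial]
      rw [h2] at h
      have h3 : lam ^ 3 * (3+1) / ((3:ℕ).factorial * 3) = lam^3 * (2/9) := by
        norm_num [Nat.factorial]
        ring
      calc Real.exp lam ≤ 1 + lam + lam^2/2 + lam ^ 3 * (↑3+1) / (↑(3:ℕ).factorial * ↑3) := h
        _ = 1 + lam + lam^2/2 + lam^3 * (2/9) := by norm_num [Nat.factorial]; ring
    have hsqrtle : M * lam ≤ Real.sqrt (2*L*c) := by rw [hMl]; exact hsq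
    nlinarith [mul_le_mul_of_nonneg_left hexp hM0,
      mul_le_mul_of_nonneg_left hsqrtle hlampos.le, hlampos.le, hc.le]
  · push_neg at h2c
    refine ⟨1, one_pos, le_refl 1, ?_⟩
    have hexp : Real.exp 1 ≤ 1 + 1 + 3/4 := by
      have := Real.exp_one_lt_d9
      linarith
    have hMsq : M ≤ Real.sqrt (2*M*c) :=
      (Real.le_sqrt hM0 (by positivity)).mpr (by nlinarith)
    nlinarith [mul_le_mul_of_nonneg_left hexp hM0, hMsq.trans hsq, hc.le]

lemma bernstein_bound {Ω : Type} [MeasurableSpace Ω] {μ : Measure Ω} [IsProbabilityMeasure μ]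
    {d : ℕ} (W : Fin d → Ω → ℝ)
    (hind : iIndepFun W μ)
    (hmeas : ∀ j, Measurable (W j))
    (h01 : ∀ j ω, W j ω ∈ Set.Icc (0:ℝ) 1)
    (m : Fin d → ℝ) (hm : ∀ j, ∫ ω, W j ω ∂μ ≤ m j) (hm0 : ∀ j, 0 ≤ m j)
    {L c : ℝ} (hL : ∑ j, m j ≤ L) (hc : 0 < c) :
    (μ {ω | (∑ j, m j) + Real.sqrt (2*L*c) + 4/3*c ≤ ∑ j, W j ω}).toReal
      ≤ Real.exp (-c) := by
  set M := ∑ j, m j with hMdef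
  have hM0 : 0 ≤ M := Finset.sum_nonneg fun j _ => hm0 j
  obtain ⟨lam, hl0, hl1, hkey⟩ := chernoff_rate hM0 hL hc
  have hone_le : (1:ℝ) ≤ Real.exp lam := by
    rw [← Real.exp_zero]; exact Real.exp_le_exp.mpr hl0.le
  have hWint : ∀ j, Integrable (fun ω => Real.exp (lam * W j ω)) μ := by
    intro j
    refine (integrable_const (Real.exp lam)).mono'
      ((hmeas j).const_mul lam).exp.aestronglyMeasurable ?_
    refine Filter.Eventually.of_forall fun ω => ?_
    rw [Real.norm_eq_abs, abs_of_pos (Real.exp_pos _)]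
    exact Real.exp_le_exp.mpr (by nlinarith [(h01 j ω).1, (h01 j ω).2, hl0.le])
  have hWj_int : ∀ j, Integrable (W j) μ := by
    intro j
    refine (integrable_const (1:ℝ)).mono' (hmeas j).aestronglyMeasurable ?_
    refine Filter.Eventually.of_forall fun ω => ?_
    rw [Real.norm_eq_abs, abs_of_nonneg (h01 j ω).1]
    exact (h01 j ω).2
  have hmgf : ∀ j, mgf (W j) μ lam ≤ Real.exp (m j * (Real.exp lam - 1)) := by
    intro j
    have hpt : ∀ ω, Real.exp (lam * W j ω) ≤ 1 + W j ω * (Real.exp lam - 1) := by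
      intro ω
      have h0 := (h01 j ω).1
      have h1 := (h01 j ω).2
      have hcv := convexOn_exp.2 (Set.mem_univ (0:ℝ)) (Set.mem_univ lam)
        (by linarith : (0:ℝ) ≤ 1 - W j ω) h0 (by ring)
      simp only [smul_eq_mul, mul_zero, Real.exp_zero, mul_one, zero_add, add_zero] at hcv
      calc Real.exp (lam * W j ω) = Real.exp (W j ω * lam) := by rw [mul_comm]
        _ ≤ (1 - W j ω) + W j ω * Real.exp lam := hcv
        _ = 1 + W j ω * (Real.exp lam - 1) := by ring
    have hint2 : Integrable (fun ω => 1 + W j ω * (Real.exp lam - 1)) μ :=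
      (integrable_const (1:ℝ)).add ((hWj_int j).mul_const _)
    calc mgf (W j) μ lam = ∫ ω, Real.exp (lam * W j ω) ∂μ := rfl
      _ ≤ ∫ ω, (1 + W j ω * (Real.exp lam - 1)) ∂μ :=
          integral_mono (hWint j) hint2 hpt
      _ = 1 + (∫ ω, W j ω ∂μ) * (Real.exp lam - 1) := by
          rw [integral_add (integrable_const _) ((hWj_int j).mul_const _),
            integral_const, integral_mul_const]
          simp
      _ ≤ 1 + m j * (Real.exp lam - 1) := by
          have := mul_le_mul_of_nonneg_right (hm j) (by linarith : 0 ≤ Real.exp lam - 1)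
          linarith
      _ ≤ Real.exp (m j * (Real.exp lam - 1)) := by
          linarith [Real.add_one_le_exp (m j * (Real.exp lam - 1))]
  have hTint : Integrable (fun ω => Real.exp (lam * (∑ j, W j) ω)) μ :=
    hind.integrable_exp_mul_sum hmeas (fun i _ => hWint i)
  have hsetEq : {ω | M + Real.sqrt (2*L*c) + 4/3*c ≤ ∑ j, W j ω}
      = {ω | M + Real.sqrt (2*L*c) + 4/3*c ≤ (∑ j, W j) ω} := by
    ext ω; simp [Finset.sum_apply]
  rw [hsetEq]
  have hch := measure_ge_le_exp_mul_mgf (μ := μ) (X := ∑ j, W j)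
    (M + Real.sqrt (2*L*c) + 4/3*c) hl0.le hTint
  rw [hind.mgf_sum hmeas Finset.univ] at hch
  refine hch.trans ?_
  have hprod : (∏ j, mgf (W j) μ lam) ≤ Real.exp (M * (Real.exp lam - 1)) := by
    calc (∏ j, mgf (W j) μ lam) ≤ ∏ j, Real.exp (m j * (Real.exp lam - 1)) :=
          Finset.prod_le_prod (fun j _ => mgf_nonneg) (fun j _ => hmgf j)
      _ = Real.exp (∑ j, m j * (Real.exp lam - 1)) := (Real.exp_sum _ _).symm
      _ = Real.exp (M * (Real.exp lam - 1)) := by rw [← Finset.sum_mul]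
  calc Real.exp (-lam * (M + Real.sqrt (2*L*c) + 4/3*c)) * ∏ j, mgf (W j) μ lam
      ≤ Real.exp (-lam * (M + Real.sqrt (2*L*c) + 4/3*c))
          * Real.exp (M * (Real.exp lam - 1)) := by
        exact mul_le_mul_of_nonneg_left hprod (Real.exp_pos _).le
    _ = Real.exp (M * (Real.exp lam - 1) - lam * (M + Real.sqrt (2*L*c) + 4/3*c)) := by
        rw [← Real.exp_add]; ring_nf
    _ ≤ Real.exp (-c) := Real.exp_le_exp.mpr hkey

noncomputable def piU (d : ℕ) : Measure (Fin d → ℝ) := Measure.pi (fun _ => I01)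
instance (d : ℕ) : IsProbabilityMeasure (piU d) := by
  rw [piU]; infer_instance

lemma piU_eval (d : ℕ) (j : Fin d) (s : Set ℝ) :
    piU d ((fun ω => ω j) ⁻¹' s) = I01 s := by
  have h1 : (fun ω : Fin d → ℝ => ω j) ⁻¹' s
      = Set.pi Set.univ (Function.update (fun _ : Fin d => (Set.univ : Set ℝ)) j s) := by
    rw [← Set.eval_preimage]
  rw [piU, h1, Measure.pi_pi]
  rw [Fintype.prod_eq_single j (fun i hij => by rw [Function.update_of_ne hij]; exact measure_univ)]
  rw [Function.update_self]

lemma piU_map_eval (d : ℕ) (j : Fin d) :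
    Measure.map (fun ω : Fin d → ℝ => ω j) (piU d) = I01 := by
  refine Measure.ext fun s hs => ?_
  rw [Measure.map_apply (measurable_pi_apply j) hs, piU_eval]

lemma piU_integral_eval (d : ℕ) (j : Fin d) (g : ℝ → ℝ) (hg : Measurable g) :
    ∫ ω, g (ω j) ∂(piU d) = ∫ u, g u ∂I01 := by
  rw [← piU_map_eval d j, integral_map (measurable_pi_apply j).aemeasurable]
  rw [piU_map_eval]
  exact hg.aestronglyMeasurable

lemma piU_indep (d : ℕ) {β : Fin d → Type} [mβ : ∀ i, MeasurableSpace (β i)]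
    (g : ∀ j, ℝ → β j) (hg : ∀ j, Measurable (g j)) :
    iIndepFun (fun j (ω : Fin d → ℝ) => g j (ω j)) (piU d) := by
  have base : iIndepFun (fun j (ω : Fin d → ℝ) => ω j) (piU d) := by
    rw [iIndepFun_iff_measure_inter_preimage_eq_mul]
    intro S sets hsets
    have h1 : (⋂ i ∈ S, (fun ω : Fin d → ℝ => ω i) ⁻¹' sets i)
        = Set.pi Set.univ (fun i => if i ∈ S then sets i else Set.univ) := by
      ext x
      simp only [Set.mem_iInter, Set.mem_preimage, Set.mem_pi, Set.mem_univ, true_implies]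
      constructor
      · intro h i
        split_ifs with hi
        · exact h i hi
        · exact Set.mem_univ _
      · intro h i hi
        have := h i
        rwa [if_pos hi] at this
    rw [h1, piU, Measure.pi_pi]
    have h2 : ∀ i : Fin d, I01 (if i ∈ S then sets i else Set.univ)
        = (if i ∈ S then I01 (sets i) else 1) := by
      intro i; split_ifs
      · rfl
      · exact measure_univ
    rw [Finset.prod_congr rfl (fun i _ => h2 i), Finset.prod_ite_mem, Finset.univ_inter]
    refine Finset.prod_congr rfl fun i _ => ?_
    rw [show Measure.pi (fun _ => I01) = piU d from rfl, piU_eval]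
  exact base.comp g hg

lemma sqrt_sum_sq_add {n : ℕ} (f g : Fin n → ℝ) :
    Real.sqrt (∑ i, (f i + g i)^2)
      ≤ Real.sqrt (∑ i, (f i)^2) + Real.sqrt (∑ i, (g i)^2) := by
  have h := norm_add_le (E := EuclideanSpace ℝ (Fin n))
    ((WithLp.equiv 2 _).symm f) ((WithLp.equiv 2 _).symm g)
  have hfg : (WithLp.equiv 2 (Fin n → ℝ)).symm f + (WithLp.equiv 2 (Fin n → ℝ)).symm g
      = (WithLp.equiv 2 (Fin n → ℝ)).symm (f + g) := by
    rfl
  rw [hfg] at h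
  simpa [EuclideanSpace.norm_eq, Real.norm_eq_abs, sq_abs] using h

end QuantCoupling

open QuantCoupling

set_option maxHeartbeats 1600000 in
/-- Lemma 5, high-probability sensitivity of `π_sk`: there is a
coupling `(Y, Y')` of the stochastic quantizations of `X` and `X'` whose
`ℓ_∞` distance is almost surely at most `‖X - X'‖_∞/w + 2`, and whose `ℓ₁` and
`ℓ₂` distances satisfy the stated bounds with probability at least `1 - δ`. -/
theorem quantization_coupling
    (d k : ℕ) (hd : 1 ≤ d) (hk : 2 ≤ k)
    (Xmax δ : ℝ) (hXmax : 0 < Xmax) (hδ0 : 0 < δ) (hδ1 : δ < 1)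
    (X X' : Fin d → ℝ)
    (hX : ∀ j, |X j| ≤ Xmax) (hX' : ∀ j, |X' j| ≤ Xmax)
    (w : ℝ) (hw : w = 2 * Xmax / ((k : ℝ) - 1))
    (B : ℕ → ℝ) (hB : ∀ t : ℕ, B t = -Xmax + t * w)
    (r r' : Fin d → ℕ)
    (hr : ∀ j, r j + 1 ≤ k - 1 ∧ B (r j) ≤ X j ∧ X j ≤ B (r j + 1))
    (hr' : ∀ j, r' j + 1 ≤ k - 1 ∧ B (r' j) ≤ X' j ∧ X' j ≤ B (r' j + 1))
    (Ltil : ℝ) (hLtil : Ltil = (∑ j, |X j - X' j|) / w) :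
    ∃ (Ω : Type) (_ : MeasurableSpace Ω) (μ : Measure Ω) (_ : IsProbabilityMeasure μ)
      (Y Y' : Ω → Fin d → ℕ),
      -- Y has the law of the stochastic quantization U(X)
      iIndepFun (fun j ω => Y ω j) μ ∧
      (∀ j, (μ {ω | Y ω j = r j + 1}).toReal = (X j - B (r j)) / w ∧
        μ {ω | Y ω j = r j ∨ Y ω j = r j + 1} = 1) ∧
      -- Y' has the law of the stochastic quantization U(X')
      iIndepFun (fun j ω => Y' ω j) μ ∧
      (∀ j, (μ {ω | Y' ω j = r' j + 1}).toReal = (X' j - B (r' j)) / w ∧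
        μ {ω | Y' ω j = r' j ∨ Y' ω j = r' j + 1} = 1) ∧
      -- ℓ∞ bound, almost surely
      (∀ᵐ ω ∂μ, ∀ j, |(Y ω j : ℝ) - (Y' ω j : ℝ)| ≤ (⨆ j', |X j' - X' j'|) / w + 2) ∧
      -- ℓ₁ and ℓ₂ bounds, with probability at least 1 - δ
      1 - δ ≤
        (μ {ω |
          (∑ j, |(Y ω j : ℝ) - (Y' ω j : ℝ)|
            ≤ Ltil + Real.sqrt (2 * Ltil * Real.log (2 / δ)) + 4 / 3 * Real.log (2 / δ))
          ∧ Real.sqrt (∑ j, ((Y ω j : ℝ) - (Y' ω j : ℝ)) ^ 2)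
            ≤ Real.sqrt (∑ j, (X j - X' j) ^ 2) / w
              + Real.sqrt (Ltil + Real.sqrt (8 * Ltil * Real.log (2 / δ))
                  + 4 / 3 * Real.log (2 / δ))}).toReal := by
  classical
  haveI : Nonempty (Fin d) := Fin.pos_iff_nonempty.mp hd
  have hk1 : (1:ℝ) ≤ (k:ℝ) - 1 := by
    have : (2:ℝ) ≤ (k:ℝ) := by exact_mod_cast hk
    linarith
  have hw0 : 0 < w := by rw [hw]; exact div_pos (by linarith) (by linarith)
  have hBsucc : ∀ t : ℕ, B (t+1) = B t + w := by
    intro t; rw [hB, hB]; push_cast; ring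
  set p : Fin d → ℝ := fun j => (X j - B (r j)) / w with hpdef
  set q : Fin d → ℝ := fun j => (X' j - B (r' j)) / w with hqdef
  have hp0 : ∀ j, 0 ≤ p j := fun j => div_nonneg (by linarith [(hr j).2.1]) hw0.le
  have hq0 : ∀ j, 0 ≤ q j := fun j => div_nonneg (by linarith [(hr' j).2.1]) hw0.le
  have hp1 : ∀ j, p j ≤ 1 := by
    intro j
    have h1 := (hr j).2.2
    rw [hBsucc (r j)] at h1
    rw [hpdef]
    exact (div_le_one hw0).mpr (by linarith)
  have hq1 : ∀ j, q j ≤ 1 := by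
    intro j
    have h1 := (hr' j).2.2
    rw [hBsucc (r' j)] at h1
    rw [hqdef]
    exact (div_le_one hw0).mpr (by linarith)
  set z : Fin d → ℤ := fun j => (r j : ℤ) - (r' j : ℤ) with hzdef
  set Dr : Fin d → ℝ := fun j => (X j - X' j) / w with hDrdef
  have hpw : ∀ j, p j * w = X j - B (r j) := fun j => div_mul_cancel₀ _ hw0.ne'
  have hqw : ∀ j, q j * w = X' j - B (r' j) := fun j => div_mul_cancel₀ _ hw0.ne'
  have hDe : ∀ j, Dr j = (z j : ℝ) + (p j - q j) := by
    intro j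
    have h1 := hpw j
    have h2 := hqw j
    rw [hB (r j)] at h1
    rw [hB (r' j)] at h2
    have hXd : X j - X' j = ((z j : ℝ) + (p j - q j)) * w := by
      have hzc : (z j : ℝ) = (r j : ℝ) - (r' j : ℝ) := by
        rw [hzdef]; push_cast; ring
      rw [hzc]; nlinarith [h1, h2]
    rw [hDrdef]
    show (X j - X' j) / w = _
    rw [hXd, mul_div_cancel_right₀ _ hw0.ne']
  have hDrabs : ∀ j, |Dr j| = |X j - X' j| / w := by
    intro j
    rw [hDrdef]
    show |(X j - X' j)/w| = _
    rw [abs_div, abs_of_pos hw0]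
  have hLtilD : Ltil = ∑ j, |Dr j| := by
    rw [hLtil, Finset.sum_div]
    exact Finset.sum_congr rfl fun j _ => (hDrabs j).symm
  have hLtil0 : 0 ≤ Ltil := by
    rw [hLtilD]; exact Finset.sum_nonneg fun j _ => abs_nonneg _
  -- the coupling
  set Y : (Fin d → ℝ) → Fin d → ℕ := fun ω j => if ω j < p j then r j + 1 else r j with hYdef
  set Y' : (Fin d → ℝ) → Fin d → ℕ := fun ω j => if ω j < q j then r' j + 1 else r' j with hY'def
  -- coordinate analysis
  have hcoord := fun j => coord (z j) (p j) (q j) (hp0 j) (hp1 j) (hq0 j) (hq1 j)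
  choose a ha0 haD hW1mem hW1int hW2mem hW2int using hcoord
  have haD' : ∀ j, a j ≤ |Dr j| := by intro j; rw [hDe j]; exact haD j
  set c : ℝ := Real.log (2 / δ) with hcdef
  have hc : 0 < c := Real.log_pos (by rw [lt_div_iff₀ hδ0]; linarith)
  have hexpc : Real.exp (-c) = δ / 2 := by
    rw [Real.exp_neg, hcdef, Real.exp_log (by positivity), inv_div]
  -- the W random variables
  set W1 : Fin d → (Fin d → ℝ) → ℝ := fun j ω =>
    |(z j : ℝ) + ((if ω j < p j then (1:ℝ) else 0) - (if ω j < q j then 1 else 0))| - a j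
    with hW1def
  set W2 : Fin d → (Fin d → ℝ) → ℝ := fun j ω =>
    (((if ω j < p j then (1:ℝ) else 0) - (if ω j < q j then 1 else 0)) - (p j - q j))^2
    with hW2def
  have hgm1 : ∀ j, Measurable (fun u : ℝ =>
      |(z j : ℝ) + ((if u < p j then (1:ℝ) else 0) - (if u < q j then 1 else 0))| - a j) := by
    intro j
    refine Measurable.sub ?_ measurable_const
    refine Measurable.abs ?_
    refine Measurable.const_add ?_ _
    exact (Measurable.ite measurableSet_Iio measurable_const measurable_const).sub
      (Measurable.ite measurableSet_Iio measurable_const measurable_const)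
  have hgm2 : ∀ j, Measurable (fun u : ℝ =>
      (((if u < p j then (1:ℝ) else 0) - (if u < q j then 1 else 0)) - (p j - q j))^2) := by
    intro j
    refine Measurable.pow_const ?_ 2
    refine Measurable.sub ?_ measurable_const
    exact (Measurable.ite measurableSet_Iio measurable_const measurable_const).sub
      (Measurable.ite measurableSet_Iio measurable_const measurable_const)
  -- difference representation
  have hYY' : ∀ (ω : Fin d → ℝ) (j : Fin d), (Y ω j : ℝ) - (Y' ω j : ℝ)
      = (z j : ℝ) + ((if ω j < p j then (1:ℝ) else 0) - (if ω j < q j then 1 else 0)) := by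
    intro ω j
    have hzc : (z j : ℝ) = (r j : ℝ) - (r' j : ℝ) := by rw [hzdef]; push_cast; ring
    rw [hYdef, hY'def, hzc]
    by_cases h1 : ω j < p j <;> by_cases h2 : ω j < q j <;> simp [h1, h2] <;> push_cast <;> ring
  have habsW1 : ∀ (ω : Fin d → ℝ) (j : Fin d),
      |(Y ω j : ℝ) - (Y' ω j : ℝ)| = a j + W1 j ω := by
    intro ω j
    rw [hYY' ω j, hW1def]
    ring
  have hD_eps : ∀ (ω : Fin d → ℝ) (j : Fin d), (Y ω j : ℝ) - (Y' ω j : ℝ)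
      = Dr j + (((if ω j < p j then (1:ℝ) else 0) - (if ω j < q j then 1 else 0)) - (p j - q j)) := by
    intro ω j
    rw [hYY' ω j, hDe j]
    ring
  -- concentration for W1
  have hind1 : iIndepFun W1 (piU d) := by
    exact piU_indep d _ hgm1
  have hmeas1 : ∀ j, Measurable (W1 j) := fun j => (hgm1 j).comp (measurable_pi_apply j)
  have h011 : ∀ j ω, W1 j ω ∈ Set.Icc (0:ℝ) 1 := fun j ω => hW1mem j (ω j)
  have hm1 : ∀ j, ∫ ω, W1 j ω ∂(piU d) ≤ |Dr j| - a j := by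
    intro j
    have h1 : ∫ ω, W1 j ω ∂(piU d) = ∫ u, (|(z j : ℝ)
        + ((if u < p j then (1:ℝ) else 0) - (if u < q j then 1 else 0))| - a j) ∂I01 :=
      piU_integral_eval d j _ (hgm1 j)
    rw [h1, hDe j]
    exact hW1int j
  have hm01 : ∀ j, 0 ≤ |Dr j| - a j := fun j => by linarith [haD' j]
  have hL1 : ∑ j, (|Dr j| - a j) ≤ Ltil := by
    rw [hLtilD]
    exact Finset.sum_le_sum fun j _ => by linarith [ha0 j]
  have hG1 := bernstein_bound (μ := piU d) W1 hind1 hmeas1 h011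
    (fun j => |Dr j| - a j) hm1 hm01 hL1 hc
  -- concentration for W2
  have hind2 : iIndepFun W2 (piU d) := by
    exact piU_indep d _ hgm2
  have hmeas2 : ∀ j, Measurable (W2 j) := fun j => (hgm2 j).comp (measurable_pi_apply j)
  have h012 : ∀ j ω, W2 j ω ∈ Set.Icc (0:ℝ) 1 := fun j ω => hW2mem j (ω j)
  have hm2 : ∀ j, ∫ ω, W2 j ω ∂(piU d) ≤ |Dr j| := by
    intro j
    have h1 : ∫ ω, W2 j ω ∂(piU d) = ∫ u, ((((if u < p j then (1:ℝ) else 0)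
        - (if u < q j then 1 else 0)) - (p j - q j))^2) ∂I01 :=
      piU_integral_eval d j _ (hgm2 j)
    rw [h1, hDe j]
    exact hW2int j
  have hm02 : ∀ j, 0 ≤ |Dr j| := fun j => abs_nonneg _
  have hL2 : ∑ j, |Dr j| ≤ Ltil := le_of_eq hLtilD.symm
  have hG2 := bernstein_bound (μ := piU d) W2 hind2 hmeas2 h012
    (fun j => |Dr j|) hm2 hm02 hL2 hc
  -- measurability of Y-related functions
  have hYr : ∀ j, Measurable (fun ω : Fin d → ℝ => (Y ω j : ℝ)) := by
    intro j
    have he : (fun ω : Fin d → ℝ => (Y ω j : ℝ))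
        = (fun u : ℝ => if u < p j then ((r j : ℝ) + 1) else (r j : ℝ)) ∘ (fun ω => ω j) := by
      funext ω
      rw [hYdef]
      by_cases h : ω j < p j <;> simp [h, Function.comp]
    rw [he]
    exact (Measurable.ite measurableSet_Iio measurable_const measurable_const).comp
      (measurable_pi_apply j)
  have hY'r : ∀ j, Measurable (fun ω : Fin d → ℝ => (Y' ω j : ℝ)) := by
    intro j
    have he : (fun ω : Fin d → ℝ => (Y' ω j : ℝ))
        = (fun u : ℝ => if u < q j then ((r' j : ℝ) + 1) else (r' j : ℝ)) ∘ (fun ω => ω j) := by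
      funext ω
      rw [hY'def]
      by_cases h : ω j < q j <;> simp [h, Function.comp]
    rw [he]
    exact (Measurable.ite measurableSet_Iio measurable_const measurable_const).comp
      (measurable_pi_apply j)
  -- the good event
  set S : Set (Fin d → ℝ) := {ω |
      (∑ j, |(Y ω j : ℝ) - (Y' ω j : ℝ)|
        ≤ Ltil + Real.sqrt (2 * Ltil * c) + 4 / 3 * c)
      ∧ Real.sqrt (∑ j, ((Y ω j : ℝ) - (Y' ω j : ℝ)) ^ 2)
        ≤ Real.sqrt (∑ j, (X j - X' j) ^ 2) / w
          + Real.sqrt (Ltil + Real.sqrt (8 * Ltil * c) + 4 / 3 * c)} with hSdef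
  have hSmeas : MeasurableSet S := by
    rw [hSdef, Set.setOf_and]
    refine MeasurableSet.inter ?_ ?_
    · exact measurableSet_le
        (Finset.measurable_sum _ fun j _ => ((hYr j).sub (hY'r j)).abs) measurable_const
    · exact measurableSet_le
        ((Finset.measurable_sum _ fun j _ => ((hYr j).sub (hY'r j)).pow_const 2).sqrt)
        measurable_const
  -- the union bound
  have hsub : Sᶜ ⊆ {ω | (∑ j, (|Dr j| - a j)) + Real.sqrt (2*Ltil*c) + 4/3*c ≤ ∑ j, W1 j ω}
      ∪ {ω | (∑ j, |Dr j|) + Real.sqrt (2*Ltil*c) + 4/3*c ≤ ∑ j, W2 j ω} := by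
    intro ω hω
    by_contra hnot
    rw [Set.mem_union] at hnot
    push_neg at hnot
    obtain ⟨h1, h2⟩ := hnot
    rw [Set.mem_setOf_eq, not_le] at h1 h2
    apply hω
    rw [hSdef, Set.mem_setOf_eq]
    constructor
    · -- ℓ1 bound
      have hsum : ∑ j, |(Y ω j : ℝ) - (Y' ω j : ℝ)| = ∑ j, (a j + W1 j ω) :=
        Finset.sum_congr rfl fun j _ => habsW1 ω j
      rw [hsum, Finset.sum_add_distrib]
      have hsplit : ∑ j, a j + ∑ j, (|Dr j| - a j) = Ltil := by
        rw [hLtilD, ← Finset.sum_add_distrib]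
        exact Finset.sum_congr rfl fun j _ => by ring
      linarith
    · -- ℓ2 bound
      have hsq : Real.sqrt (∑ j, ((Y ω j : ℝ) - (Y' ω j : ℝ)) ^ 2)
          ≤ Real.sqrt (∑ j, (Dr j)^2) + Real.sqrt (∑ j, W2 j ω) := by
        have h3 : (∑ j, ((Y ω j : ℝ) - (Y' ω j : ℝ)) ^ 2)
            = ∑ j, (Dr j + ((((if ω j < p j then (1:ℝ) else 0)
                - (if ω j < q j then 1 else 0)) - (p j - q j))))^2 :=
          Finset.sum_congr rfl fun j _ => by rw [hD_eps ω j]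
        rw [h3]
        exact sqrt_sum_sq_add _ _
      have hDsum : Real.sqrt (∑ j, (Dr j)^2) = Real.sqrt (∑ j, (X j - X' j) ^ 2) / w := by
        have h4 : (∑ j, (Dr j)^2) = (∑ j, (X j - X' j) ^ 2) / w^2 := by
          rw [Finset.sum_div]
          refine Finset.sum_congr rfl fun j _ => ?_
          rw [hDrdef]
          show ((X j - X' j)/w)^2 = _
          rw [div_pow]
        rw [h4, Real.sqrt_div (Finset.sum_nonneg fun j _ => sq_nonneg _),
          Real.sqrt_sq hw0.le]
      have hW2sum : Real.sqrt (∑ j, W2 j ω)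
          ≤ Real.sqrt (Ltil + Real.sqrt (8 * Ltil * c) + 4 / 3 * c) := by
        apply Real.sqrt_le_sqrt
        have h8 : Real.sqrt (2*Ltil*c) ≤ Real.sqrt (8 * Ltil * c) := by
          apply Real.sqrt_le_sqrt; nlinarith
        have := hLtilD
        linarith [h2, h8]
      calc Real.sqrt (∑ j, ((Y ω j : ℝ) - (Y' ω j : ℝ)) ^ 2)
          ≤ Real.sqrt (∑ j, (Dr j)^2) + Real.sqrt (∑ j, W2 j ω) := hsq
        _ ≤ Real.sqrt (∑ j, (X j - X' j) ^ 2) / w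
            + Real.sqrt (Ltil + Real.sqrt (8 * Ltil * c) + 4 / 3 * c) := by
            rw [hDsum]; linarith [hW2sum]
  have hcompl : (piU d Sᶜ).toReal ≤ δ := by
    have hle : piU d Sᶜ ≤ piU d {ω | (∑ j, (|Dr j| - a j)) + Real.sqrt (2*Ltil*c)
          + 4/3*c ≤ ∑ j, W1 j ω}
        + piU d {ω | (∑ j, |Dr j|) + Real.sqrt (2*Ltil*c) + 4/3*c ≤ ∑ j, W2 j ω} :=
      (measure_mono hsub).trans (measure_union_le _ _)
    have h5 : (piU d Sᶜ).toReal ≤ (piU d {ω | (∑ j, (|Dr j| - a j)) + Real.sqrt (2*Ltil*c)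
          + 4/3*c ≤ ∑ j, W1 j ω}).toReal
        + (piU d {ω | (∑ j, |Dr j|) + Real.sqrt (2*Ltil*c) + 4/3*c ≤ ∑ j, W2 j ω}).toReal := by
      rw [← ENNReal.toReal_add (measure_ne_top _ _) (measure_ne_top _ _)]
      exact ENNReal.toReal_mono (ENNReal.add_ne_top.mpr
        ⟨measure_ne_top _ _, measure_ne_top _ _⟩) hle
    rw [hexpc] at hG1 hG2
    linarith [h5, hG1, hG2]
  -- conclude
  refine ⟨Fin d → ℝ, inferInstance, piU d, inferInstance, Y, Y', ?_, ?_, ?_, ?_, ?_, ?_⟩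
  · exact piU_indep d (fun j u => if u < p j then r j + 1 else r j)
      (fun j => Measurable.ite measurableSet_Iio measurable_const measurable_const)
  · intro j
    constructor
    · have hset : {ω : Fin d → ℝ | Y ω j = r j + 1} = (fun ω => ω j) ⁻¹' (Set.Iio (p j)) := by
        ext ω
        simp only [hYdef, Set.mem_setOf_eq, Set.mem_preimage, Set.mem_Iio]
        split_ifs with h
        · exact iff_of_true rfl h
        · exact iff_of_false (by omega) h
      rw [hset, piU_eval]
      have hIio : I01 (Set.Iio (p j)) = ENNReal.ofReal (p j) := by
        rw [I01, Measure.restrict_apply measurableSet_Iio]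
        have hiEq : Set.Iio (p j) ∩ Set.Icc 0 1 = Set.Ico 0 (p j) := by
          ext u
          simp only [Set.mem_inter_iff, Set.mem_Iio, Set.mem_Icc, Set.mem_Ico]
          constructor
          · rintro ⟨h1, h2, h3⟩; exact ⟨h2, h1⟩
          · rintro ⟨h1, h2⟩; exact ⟨h2, h1, le_trans h2.le (hp1 j)⟩
        rw [hiEq, Real.volume_Ico, sub_zero]
      rw [hIio, ENNReal.toReal_ofReal (hp0 j)]
    · have hset : {ω : Fin d → ℝ | Y ω j = r j ∨ Y ω j = r j + 1} = Set.univ := by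
        refine Set.eq_univ_of_forall fun ω => ?_
        simp only [hYdef, Set.mem_setOf_eq]
        by_cases h : ω j < p j
        · right; rw [if_pos h]
        · left; rw [if_neg h]
      rw [hset, measure_univ]
  · exact piU_indep d (fun j u => if u < q j then r' j + 1 else r' j)
      (fun j => Measurable.ite measurableSet_Iio measurable_const measurable_const)
  · intro j
    constructor
    · have hset : {ω : Fin d → ℝ | Y' ω j = r' j + 1} = (fun ω => ω j) ⁻¹' (Set.Iio (q j)) := by
        ext ω
        simp only [hY'def, Set.mem_setOf_eq, Set.mem_preimage, Set.mem_Iio]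
        split_ifs with h
        · exact iff_of_true rfl h
        · exact iff_of_false (by omega) h
      rw [hset, piU_eval]
      have hIio : I01 (Set.Iio (q j)) = ENNReal.ofReal (q j) := by
        rw [I01, Measure.restrict_apply measurableSet_Iio]
        have hiEq : Set.Iio (q j) ∩ Set.Icc 0 1 = Set.Ico 0 (q j) := by
          ext u
          simp only [Set.mem_inter_iff, Set.mem_Iio, Set.mem_Icc, Set.mem_Ico]
          constructor
          · rintro ⟨h1, h2, h3⟩; exact ⟨h2, h1⟩
          · rintro ⟨h1, h2⟩; exact ⟨h2, h1, le_trans h2.le (hq1 j)⟩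
        rw [hiEq, Real.volume_Ico, sub_zero]
      rw [hIio, ENNReal.toReal_ofReal (hq0 j)]
    · have hset : {ω : Fin d → ℝ | Y' ω j = r' j ∨ Y' ω j = r' j + 1} = Set.univ := by
        refine Set.eq_univ_of_forall fun ω => ?_
        simp only [hY'def, Set.mem_setOf_eq]
        by_cases h : ω j < q j
        · right; rw [if_pos h]
        · left; rw [if_neg h]
      rw [hset, measure_univ]
  · -- ℓ∞ bound
    refine Filter.Eventually.of_forall fun ω j => ?_
    have heps : |(((if ω j < p j then (1:ℝ) else 0) - (if ω j < q j then 1 else 0))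
        - (p j - q j))| ≤ 1 := by
      have hsq := (hW2mem j (ω j)).2
      set e := ((if ω j < p j then (1:ℝ) else 0) - (if ω j < q j then 1 else 0)) - (p j - q j)
      nlinarith [abs_nonneg e, sq_abs e]
    have hDrle : |Dr j| ≤ (⨆ j', |X j' - X' j'|) / w := by
      rw [hDrabs j]
      have hle : |X j - X' j| ≤ ⨆ j', |X j' - X' j'| :=
        le_ciSup (f := fun j' => |X j' - X' j'|) (Set.Finite.bddAbove (Set.finite_range _)) j
      exact (div_le_div_iff_of_pos_right hw0).mpr hle
    calc |(Y ω j : ℝ) - (Y' ω j : ℝ)|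
        = |Dr j + (((if ω j < p j then (1:ℝ) else 0) - (if ω j < q j then 1 else 0))
            - (p j - q j))| := by rw [hD_eps ω j]
      _ ≤ |Dr j| + 1 := by
          refine le_trans (abs_add_le _ _) ?_
          linarith [heps]
      _ ≤ (⨆ j', |X j' - X' j'|) / w + 2 := by linarith [hDrle]
  · -- probability bound
    have htot : (piU d S).toReal + (piU d Sᶜ).toReal = 1 := by
      have h := measure_add_measure_compl (μ := piU d) hSmeas
      rw [measure_univ] at h
      have h2 := congrArg ENNReal.toReal h
      rwa [ENNReal.toReal_add (measure_ne_top _ _) (measure_ne_top _ _),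
        ENNReal.toReal_one] at h2
    have hgoal : (piU d S).toReal = (piU d {ω : Fin d → ℝ |
        (∑ j, |(Y ω j : ℝ) - (Y' ω j : ℝ)|
          ≤ Ltil + Real.sqrt (2 * Ltil * Real.log (2 / δ)) + 4 / 3 * Real.log (2 / δ))
        ∧ Real.sqrt (∑ j, ((Y ω j : ℝ) - (Y' ω j : ℝ)) ^ 2)
          ≤ Real.sqrt (∑ j, (X j - X' j) ^ 2) / w
            + Real.sqrt (Ltil + Real.sqrt (8 * Ltil * Real.log (2 / δ))
                + 4 / 3 * Real.log (2 / δ))}).toReal := by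
      rw [hSdef, hcdef]
    rw [← hgoal]
    linarith [htot, hcompl]
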